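/- Define H : ℝ³ → ℝ by H(ξ) = ‖ξ‖·√(2 + ‖ξ‖²). Let ξ, ξ₁ ∈ ℝ³ be nonzero with ⟨ξ, ξ₁⟩ ≤ -½·‖ξ‖·‖ξ₁‖, and set ξ₂ = ξ - ξ₁. Then ‖ξ₂‖² - ‖ξ₁‖² ≥ ‖ξ‖·‖ξ₁‖, and H(ξ) + H(ξ₂) - H(ξ₁) ≥ √2 · ‖ξ‖·‖ξ₁‖/(‖ξ₁‖ + ‖ξ₂‖). -/

import Mathlib

set_option maxHeartbeats 1600000 in
lemma stmt_13_aux (a b c : ℝ) (ha : 0 < a) (hb : 0 ≤ b) (hc : 0 < c)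
    (part1 : c * a ≤ b ^ 2 - a ^ 2) :
    Real.sqrt 2 * (c * a / (a + b)) ≤
      c * Real.sqrt (2 + c ^ 2) + b * Real.sqrt (2 + b ^ 2) - a * Real.sqrt (2 + a ^ 2) := by
  set sa := Real.sqrt (2 + a ^ 2) with hsa_def
  set sb := Real.sqrt (2 + b ^ 2) with hsb_def
  set sc := Real.sqrt (2 + c ^ 2) with hsc_def
  have hsa2 : sa ^ 2 = 2 + a ^ 2 := Real.sq_sqrt (by positivity)
  have hsb2 : sb ^ 2 = 2 + b ^ 2 := Real.sq_sqrt (by positivity)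
  have hs2pos : 0 < Real.sqrt 2 := Real.sqrt_pos.mpr (by norm_num)
  have hsa_ge : Real.sqrt 2 ≤ sa := Real.sqrt_le_sqrt (by nlinarith [sq_nonneg a])
  have hsb_ge : Real.sqrt 2 ≤ sb := Real.sqrt_le_sqrt (by nlinarith [sq_nonneg b])
  have hsa_pos : 0 < sa := lt_of_lt_of_le hs2pos hsa_ge
  have hsb_pos : 0 < sb := lt_of_lt_of_le hs2pos hsb_ge
  have hsc_nonneg : 0 ≤ sc := Real.sqrt_nonneg _
  have h2a : Real.sqrt 2 * sa ≤ 2 + a ^ 2 := by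
    nlinarith [mul_le_mul_of_nonneg_left hsa_ge hsa_pos.le]
  have h2b : Real.sqrt 2 * sb ≤ 2 + b ^ 2 := by
    nlinarith [mul_le_mul_of_nonneg_left hsb_ge hsb_pos.le]
  have hD : 0 < b * sb + a * sa := by
    nlinarith [mul_pos ha hsa_pos, mul_nonneg hb hsb_pos.le]
  have hid : (b * sb - a * sa) * (b * sb + a * sa)
      = (b ^ 2 - a ^ 2) * (2 + a ^ 2 + b ^ 2) := by
    linear_combination b ^ 2 * hsb2 - a ^ 2 * hsa2
  have s1 : Real.sqrt 2 * (b * sb + a * sa) ≤ (a + b) * (2 + a ^ 2 + b ^ 2) := by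
    have u1 : b * (Real.sqrt 2 * sb) ≤ b * (2 + b ^ 2) := mul_le_mul_of_nonneg_left h2b hb
    have u2 : a * (Real.sqrt 2 * sa) ≤ a * (2 + a ^ 2) := mul_le_mul_of_nonneg_left h2a ha.le
    have u3 : a * (2 + a ^ 2) + b * (2 + b ^ 2) ≤ (a + b) * (2 + a ^ 2 + b ^ 2) := by
      nlinarith [mul_nonneg ha.le (sq_nonneg b), mul_nonneg hb (sq_nonneg a)]
    nlinarith [u1, u2, u3]
  have s2 : (Real.sqrt 2 * (c * a)) * (b * sb + a * sa)
      ≤ ((b * sb - a * sa) * (a + b)) * (b * sb + a * sa) := by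
    have e2 : ((b * sb - a * sa) * (a + b)) * (b * sb + a * sa)
        = ((b ^ 2 - a ^ 2) * (2 + a ^ 2 + b ^ 2)) * (a + b) := by
      linear_combination (a + b) * hid
    rw [e2]
    have t1 : (c * a) * (Real.sqrt 2 * (b * sb + a * sa))
        ≤ (c * a) * ((a + b) * (2 + a ^ 2 + b ^ 2)) :=
      mul_le_mul_of_nonneg_left s1 (mul_pos hc ha).le
    have t2 : (c * a) * ((a + b) * (2 + a ^ 2 + b ^ 2))
        ≤ ((b ^ 2 - a ^ 2) * (2 + a ^ 2 + b ^ 2)) * (a + b) := by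
      have := mul_le_mul_of_nonneg_right part1
        (by positivity : (0:ℝ) ≤ (2 + a ^ 2 + b ^ 2) * (a + b))
      nlinarith [this]
    nlinarith [t1, t2]
  have key : Real.sqrt 2 * (c * a) ≤ (b * sb - a * sa) * (a + b) :=
    le_of_mul_le_mul_right s2 hD
  have hab : 0 < a + b := by linarith
  have hdiv : Real.sqrt 2 * (c * a / (a + b)) ≤ b * sb - a * sa := by
    rw [mul_div_assoc']
    exact (div_le_iff₀ hab).mpr key
  nlinarith [mul_nonneg hc.le hsc_nonneg]

/-- For `H(ξ) = ‖ξ‖·√(2 + ‖ξ‖²)` on `ℝ³`: if `ξ, ξ₁ ≠ 0` with `⟨ξ, ξ₁⟩ ≤ -½‖ξ‖‖ξ₁‖`,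
then with `ξ₂ = ξ - ξ₁` one has `‖ξ₂‖² - ‖ξ₁‖² ≥ ‖ξ‖‖ξ₁‖` and
`H(ξ) + H(ξ₂) - H(ξ₁) ≥ √2·‖ξ‖‖ξ₁‖/(‖ξ₁‖ + ‖ξ₂‖)`. -/
theorem stmt_13 (H : EuclideanSpace ℝ (Fin 3) → ℝ)
    (hH : ∀ ξ : EuclideanSpace ℝ (Fin 3), H ξ = ‖ξ‖ * Real.sqrt (2 + ‖ξ‖ ^ 2))
    (ξ ξ₁ : EuclideanSpace ℝ (Fin 3)) (hξ : ξ ≠ 0) (hξ₁ : ξ₁ ≠ 0)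
    (hang : (inner ℝ ξ ξ₁ : ℝ) ≤ -(1 / 2) * (‖ξ‖ * ‖ξ₁‖)) :
    ‖ξ‖ * ‖ξ₁‖ ≤ ‖ξ - ξ₁‖ ^ 2 - ‖ξ₁‖ ^ 2 ∧
    Real.sqrt 2 * (‖ξ‖ * ‖ξ₁‖ / (‖ξ₁‖ + ‖ξ - ξ₁‖)) ≤ H ξ + H (ξ - ξ₁) - H ξ₁ := by
  have ha : 0 < ‖ξ₁‖ := norm_pos_iff.mpr hξ₁
  have hc : 0 < ‖ξ‖ := norm_pos_iff.mpr hξ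
  have hb : 0 ≤ ‖ξ - ξ₁‖ := norm_nonneg _
  have hexp : ‖ξ - ξ₁‖ ^ 2 = ‖ξ‖ ^ 2 - 2 * (inner ℝ ξ ξ₁ : ℝ) + ‖ξ₁‖ ^ 2 := by
    simpa using @norm_sub_sq_real (EuclideanSpace ℝ (Fin 3)) _ _ ξ ξ₁
  have part1 : ‖ξ‖ * ‖ξ₁‖ ≤ ‖ξ - ξ₁‖ ^ 2 - ‖ξ₁‖ ^ 2 := by nlinarith [sq_nonneg ‖ξ‖]
  refine ⟨part1, ?_⟩
  rw [hH, hH, hH]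
  have := stmt_13_aux ‖ξ₁‖ ‖ξ - ξ₁‖ ‖ξ‖ ha hb hc (by linarith)
  linarith
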